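/- arXiv:2408.15783 — 2 statements merged into one kernel-verified Lean document; each statement's English description precedes it below -/
import Mathlib

section
/- Let d ≥ 1, R > 0, let B_R ⊂ ℝ^d be a ball of radius R, let m ∈ L^∞(ℝ^d), and let φ be a Schwartz function on ℝ^d whose Fourier transform equals 1 on B(0,2). Set φ_R(ξ) := R^d φ(Rξ) and m_R := φ_R * m. Then, as bounded operators on L²(ℝ^d), 1_{B_R} m(D) 1_{B_R} = 1_{B_R} m_R(D) 1_{B_R}, where m(D) denotes the Fourier multiplier operator with symbol m and 1_{B_R} denotes multiplication by the indicator function of B_R. -/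
open MeasureTheory Complex Metric Set Filter
open scoped Real ENNReal Topology ComplexConjugate

noncomputable section

/-- Euclidean space `ℝ^d`. -/
abbrev Euc (d : ℕ) : Type := EuclideanSpace ℝ (Fin d)

/-- The unit sphere `S^{d-1} ⊆ ℝ^d`. -/
abbrev Sph (d : ℕ) : Type := Metric.sphere (0 : Euc d) 1

/-- The induced (surface) measure on the unit sphere. -/
instance sphereMeasureSpace (d : ℕ) : MeasureSpace (Sph d) :=
  ⟨(volume : Measure (Euc d)).toSphere⟩

/-- `L²(ℝ^d)`. -/
abbrev Ltwo (d : ℕ) := Lp ℂ 2 (volume : Measure (Euc d))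

/-- The dot product `x·ξ`, as a complex number. -/
def dotC {d : ℕ} (x ξ : Euc d) : ℂ := ((inner ℝ x ξ : ℝ) : ℂ)

/-- The `(n+1)`-st singular value of a continuous linear map between normed spaces, defined
as the approximation number `s_{n+1}(T) = inf {‖T - F‖ : rank F ≤ n}`; for operators between
Hilbert spaces this coincides with the usual singular values. -/
def sVal {H₁ H₂ : Type*} [NormedAddCommGroup H₁] [NormedSpace ℂ H₁]
    [NormedAddCommGroup H₂] [NormedSpace ℂ H₂] (T : H₁ →L[ℂ] H₂) (n : ℕ) : ℝ :=
  sInf {c : ℝ | ∃ F : H₁ →L[ℂ] H₂,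
    Module.rank ℂ (LinearMap.range F.toLinearMap) ≤ (n : Cardinal) ∧ c = ‖T - F‖}

/-- `T` belongs to the Schatten class `S^p` with `‖T‖_{S^p} ≤ C`. -/
def SchattenNormLE {H₁ H₂ : Type*} [NormedAddCommGroup H₁] [NormedSpace ℂ H₁]
    [NormedAddCommGroup H₂] [NormedSpace ℂ H₂] (p : ℝ) (T : H₁ →L[ℂ] H₂) (C : ℝ) : Prop :=
  Summable (fun n => sVal T n ^ p) ∧ (∑' n : ℕ, sVal T n ^ p) ^ (1 / p) ≤ C

/-- A function on `ℝ^d` is radial if it depends only on `|x|`. -/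
def IsRadial {d : ℕ} {α : Type*} (W : Euc d → α) : Prop :=
  ∀ x y : Euc d, ‖x‖ = ‖y‖ → W x = W y

/-- The `L^r` norm of a function on `ℝ^d`. -/
def lNorm {d : ℕ} (r : ℝ) (W : Euc d → ℂ) : ℝ :=
  (eLpNorm W (ENNReal.ofReal r) volume).toReal

/-- `z` lies in `ℂ ∖ [0,∞)`. -/
def OffHalfLine (z : ℂ) : Prop := ¬ (z.im = 0 ∧ 0 ≤ z.re)

/-- `δ(z) = dist(z, [0,∞))`. -/
def deltaDist (z : ℂ) : ℝ := Metric.infDist z {w : ℂ | w.im = 0 ∧ 0 ≤ w.re}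

/-- distance between two sets -/
def setDist {X : Type*} [PseudoMetricSpace X] (A B : Set X) : ℝ :=
  sInf (Set.image2 dist A B)

/-- `T` is the operator `W₁ m(D) W₂` on `L²(ℝ^d)`, characterized weakly (with the convention
`m(D) f = (2π)^{-d} ∫ e^{i x·ξ} m(ξ) f̂(ξ) dξ`, `f̂(ξ) = ∫ e^{-i y·ξ} f(y) dy`). -/
def IsSandwichedMultiplier {d : ℕ} (m W₁ W₂ : Euc d → ℂ) (T : Ltwo d →L[ℂ] Ltwo d) : Prop :=
  ∀ (f g : Euc d → ℂ) (hf : MemLp f 2 (volume : Measure (Euc d)))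
      (hg : MemLp g 2 (volume : Measure (Euc d))),
    Continuous f → HasCompactSupport f → Continuous g → HasCompactSupport g →
    (inner ℂ (hg.toLp g) (T (hf.toLp f)) : ℂ) =
      ((((2 * Real.pi) ^ d)⁻¹ : ℝ) : ℂ) *
        ∫ ξ : Euc d, m ξ *
          (∫ y : Euc d, Complex.exp (-(Complex.I * dotC y ξ)) * W₂ y * f y) *
          (∫ x : Euc d, Complex.exp (Complex.I * dotC x ξ) * W₁ x * (starRingEnd ℂ) (g x))

/-- The symbol of the free resolvent `(-Δ - z)⁻¹`. -/
def resolventSymbol {d : ℕ} (z : ℂ) (ξ : Euc d) : ℂ := (((‖ξ‖ ^ 2 : ℝ) : ℂ) - z)⁻¹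

/-- `χ` is a smooth radial cutoff equal to `1` on `B(0,2)` and supported in `B(0,4)`. -/
def IsLowCutoff {d : ℕ} (χ : Euc d → ℝ) : Prop :=
  ContDiff ℝ (⊤ : ℕ∞) χ ∧ IsRadial χ ∧ (∀ x ∈ Metric.ball (0 : Euc d) 2, χ x = 1) ∧
    Function.support χ ⊆ Metric.ball (0 : Euc d) 4

/-- The symbol of the low-energy resolvent `R₀(z)^{low}`. -/
def lowSymbol {d : ℕ} (χ : Euc d → ℝ) (z : ℂ) (ξ : Euc d) : ℂ :=
  resolventSymbol z ξ * ((χ ((Real.sqrt z.re)⁻¹ • ξ) : ℝ) : ℂ)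

/-- The Fourier extension operator `ℰ(λ)` of the unit sphere:
`ℰ(λ)g(x) = ∫_{S^{d-1}} e^{iλ x·ω} g(ω) dS(ω)`. -/
def fourierExt {d : ℕ} (lam : ℝ) (g : Sph d → ℂ) (x : Euc d) : ℂ :=
  ∫ ω : Sph d, Complex.exp (Complex.I * lam * dotC x (ω : Euc d)) * g ω

/-- `T` is the operator `W₁ ℰ ℰ* W₂` on `L²(ℝ^d)`, characterized weakly. -/
def IsSandwichedExtension {d : ℕ} (W₁ W₂ : Euc d → ℂ) (T : Ltwo d →L[ℂ] Ltwo d) : Prop :=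
  ∀ (f g : Euc d → ℂ) (hf : MemLp f 2 (volume : Measure (Euc d)))
      (hg : MemLp g 2 (volume : Measure (Euc d))),
    Continuous f → HasCompactSupport f → Continuous g → HasCompactSupport g →
    (inner ℂ (hg.toLp g) (T (hf.toLp f)) : ℂ) =
      ∫ ω : Sph d,
        (∫ y : Euc d, Complex.exp (-(Complex.I * dotC y (ω : Euc d))) * W₂ y * f y) *
        (∫ x : Euc d, Complex.exp (Complex.I * dotC x (ω : Euc d)) * W₁ x * (starRingEnd ℂ) (g x))

/-- The Bessel function of the first kind `J_μ` (for `μ > -1/2`), via the Poisson integral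
representation. -/
def besselJ (μ : ℝ) (x : ℝ) : ℝ :=
  (x / 2) ^ μ / (Real.Gamma (μ + 1 / 2) * Real.sqrt Real.pi) *
    ∫ t in (-1 : ℝ)..(1 : ℝ), Real.cos (x * t) * (1 - t ^ 2) ^ (μ - 1 / 2)

/-- The Laplacian of a function on `ℝ^d`. -/
def lap {d : ℕ} (φ : Euc d → ℂ) (x : Euc d) : ℂ :=
  ∑ i : Fin d, iteratedFDeriv ℝ 2 φ x (fun _ => EuclideanSpace.single i (1 : ℝ))

/-- `H f = z f + g` in the sense of distributions, where `H = -Δ + V`. -/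
def WeakSchrodinger {d : ℕ} (V : Euc d → ℂ) (z : ℂ) (f g : Euc d → ℂ) : Prop :=
  ∀ φ : Euc d → ℂ, ContDiff ℝ (⊤ : ℕ∞) φ → HasCompactSupport φ →
    (-∫ x : Euc d, f x * lap φ x) + ∫ x : Euc d, V x * f x * φ x =
      z * ∫ x : Euc d, f x * φ x + ∫ x : Euc d, g x * φ x

/-- `z` is an eigenvalue of `H = -Δ + V` on `L²(ℝ^d)`. -/
def IsSchrodingerEigenvalue (d : ℕ) (V : Euc d → ℂ) (z : ℂ) : Prop :=
  ∃ f : Euc d → ℂ, MemLp f 2 (volume : Measure (Euc d)) ∧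
    ¬ f =ᵐ[(volume : Measure (Euc d))] 0 ∧
    LocallyIntegrable (fun x => V x * f x) (volume : Measure (Euc d)) ∧
    WeakSchrodinger V z f 0

/-- Membership in the generalized (algebraic) eigenspace of `H = -Δ + V` at `z`,
  as a subset of `L²`: there is a finite Jordan chain ending at `0`. -/
def InGenEigenspace (d : ℕ) (V : Euc d → ℂ) (z : ℂ) (F : Ltwo d) : Prop :=
  ∃ (n : ℕ) (g : ℕ → Euc d → ℂ) (hg : ∀ i, MemLp (g i) 2 (volume : Measure (Euc d))),
    F = (hg 0).toLp (g 0) ∧ (∀ x, g n x = 0) ∧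
    ∀ i < n, LocallyIntegrable (fun x => V x * g i x) (volume : Measure (Euc d)) ∧
      WeakSchrodinger V z (g i) (g (i + 1))

/-- The algebraic multiplicity of `z` as an eigenvalue of `H = -Δ + V`. -/
def algMultiplicity (d : ℕ) (V : Euc d → ℂ) (z : ℂ) : Cardinal :=
  Module.rank ℂ (Submodule.span ℂ {F : Ltwo d | InGenEigenspace d V z F})

lemma continuous_dotC {d : ℕ} : Continuous fun p : Euc d × Euc d => dotC p.1 p.2 :=
  Complex.continuous_ofReal.comp continuous_inner

lemma continuous_dotC_right {d : ℕ} (x : Euc d) : Continuous fun ξ : Euc d => dotC x ξ :=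
  continuous_dotC.comp (Continuous.prodMk_right x)

lemma continuous_dotC_left {d : ℕ} (ξ : Euc d) : Continuous fun x : Euc d => dotC x ξ :=
  continuous_dotC.comp (continuous_id.prodMk continuous_const)

lemma norm_exp_dotC (x ξ : Euc (d:ℕ)) : ‖Complex.exp (I * dotC x ξ)‖ = 1 := by
  rw [Complex.norm_exp, dotC]
  simp [Complex.mul_re]

lemma norm_exp_dotC' {d : ℕ} (x ξ : Euc d) : ‖Complex.exp (-(I * dotC x ξ))‖ = 1 := by
  rw [Complex.norm_exp, dotC]
  simp [Complex.mul_re]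

lemma conj_exp_dotC' {d : ℕ} (x ξ : Euc d) :
    (starRingEnd ℂ) (Complex.exp (-(I * dotC x ξ))) = Complex.exp (I * dotC x ξ) := by
  rw [← Complex.exp_conj, dotC]
  simp

lemma hatF_continuous {d : ℕ} {f : Euc d → ℂ} (hfi : Integrable f) :
    Continuous (fun ξ : Euc d => ∫ x : Euc d, f x * Complex.exp (-(I * dotC x ξ))) := by
  apply continuous_of_dominated (bound := fun x => ‖f x‖)
  · intro ξ
    exact hfi.1.mul (Complex.continuous_exp.comp (continuous_const.mul (continuous_dotC_left ξ)).neg).aestronglyMeasurable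
  · intro ξ
    filter_upwards with x
    rw [norm_mul, norm_exp_dotC', mul_one]
  · exact hfi.norm
  · filter_upwards with x
    exact Continuous.mul continuous_const (Complex.continuous_exp.comp (continuous_const.mul (continuous_dotC_right x)).neg)

lemma integrable_gaussE {d : ℕ} {ε : ℝ} (hε : 0 < ε) :
    Integrable (fun ξ : Euc d => Real.exp (-ε * ‖ξ‖^2)) := by
  have h := (GaussianFourier.integrable_cexp_neg_mul_sq_norm_add (V := Euc d)
      (b := (ε:ℂ)) (by simpa) 0 0).norm
  apply h.congr
  filter_upwards with v
  have : (-(ε:ℂ) * (‖v‖:ℂ)^2 + 0 * ((inner ℝ (0 : Euc d) v : ℝ) : ℂ)) = ((-ε * ‖v‖^2 : ℝ) : ℂ) := by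
    push_cast; ring
  rw [this]
  rw [Complex.norm_exp_ofReal]

lemma integral_gaussE {d : ℕ} {ε : ℝ} (hε : 0 < ε) :
    ∫ ξ : Euc d, Real.exp (-ε * ‖ξ‖^2) = (Real.pi / ε) ^ ((d:ℝ) / 2) := by
  rw [GaussianFourier.integral_rexp_neg_mul_sq_norm (V := Euc d) hε]
  norm_num [finrank_euclideanSpace_fin]

lemma conj_hatF {d : ℕ} (f : Euc d → ℂ) (ξ : Euc d) :
    (starRingEnd ℂ) (∫ x : Euc d, f x * Complex.exp (-(I * dotC x ξ)))
      = ∫ x : Euc d, (starRingEnd ℂ) (f x) * Complex.exp (I * dotC x ξ) := by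
  rw [← integral_conj]
  congr 1; ext x
  rw [map_mul, conj_exp_dotC']

lemma memL2_hat {d : ℕ} {f : Euc d → ℂ} (hf : Continuous f) (hsupp : HasCompactSupport f) :
    MemLp (fun ξ : Euc d => ∫ x : Euc d, f x * Complex.exp (-(I * dotC x ξ))) 2
      (volume : Measure (Euc d)) := by
  have hfi : Integrable f := hf.integrable_of_hasCompactSupport hsupp
  set hat : Euc d → ℂ := fun ξ => ∫ x : Euc d, f x * Complex.exp (-(I * dotC x ξ)) with hhat
  have hatc : Continuous hat := hatF_continuous hfi
  obtain ⟨Cf, hCf⟩ := hsupp.exists_bound_of_continuous hf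
  set B : ℝ := ∫ x : Euc d, ‖f x‖ with hB
  have hB0 : 0 ≤ B := integral_nonneg (fun x => norm_nonneg _)
  have hCf0 : 0 ≤ Cf := le_trans (norm_nonneg _) (hCf 0)
  have hhatle : ∀ ξ, ‖hat ξ‖ ≤ B := by
    intro ξ
    calc ‖hat ξ‖ ≤ ∫ x, ‖f x * Complex.exp (-(I * dotC x ξ))‖ := norm_integral_le_integral_norm _
    _ = B := by rw [hB]; congr 1; ext x; rw [norm_mul, norm_exp_dotC', mul_one]
  set M : ℝ := (2 * Real.pi) ^ d * (Cf * B) with hM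
  have key : ∀ ε : ℝ, 0 < ε → (∫ ξ : Euc d, Real.exp (-ε * ‖ξ‖^2) * ‖hat ξ‖^2) ≤ M := by
    intro ε hε
    set A : ℝ := (Real.pi / ε) ^ ((d:ℝ)/2) with hA
    have hA0 : 0 ≤ A := Real.rpow_nonneg (by positivity) _
    set Kε : Euc d → ℝ := fun u => A * Real.exp (-(4*ε)⁻¹ * ‖u‖^2) with hKe
    have hKe0 : ∀ u, 0 ≤ Kε u := fun u => by rw [hKe]; positivity
    have hKcont : Continuous Kε := continuous_const.mul
      (Real.continuous_exp.comp (continuous_const.mul (continuous_norm.pow 2)))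
    have hKint : Integrable Kε := (integrable_gaussE (by positivity)).const_mul A
    have hKval : (∫ u : Euc d, Kε u) = (2*Real.pi)^d := by
      rw [hKe]
      rw [MeasureTheory.integral_const_mul]
      rw [integral_gaussE (by positivity)]
      rw [hA, ← Real.mul_rpow (by positivity) (by positivity)]
      have h1 : Real.pi / ε * (Real.pi / (4*ε)⁻¹) = (2*Real.pi)^2 := by
        field_simp
        ring
      rw [h1]
      rw [← Real.rpow_two, ← Real.rpow_mul (by positivity)]
      have h2 : (2:ℝ) * ((d:ℝ)/2) = (d:ℝ) := by ring
      rw [h2, Real.rpow_natCast]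
    set H : Euc d × Euc d → ℂ := fun p =>
      (f p.1 * (starRingEnd ℂ) (f p.2)) *
        (((Real.pi:ℂ) / (ε:ℂ)) ^ ((Module.finrank ℝ (Euc d) : ℂ)/2) *
          Complex.exp ((-I)^2 * (‖p.1 - p.2‖:ℂ)^2 / (4*(ε:ℂ)))) with hH
    have hnormH : ∀ p : Euc d × Euc d, ‖H p‖ = ‖f p.1‖ * ‖f p.2‖ * Kε (p.1 - p.2) := by
      intro p
      rw [hH]
      simp only [norm_mul, RCLike.norm_conj]
      have e1 : ((Real.pi:ℂ) / (ε:ℂ)) = ((Real.pi / ε : ℝ) : ℂ) := by push_cast; ring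
      have e2 : ((-I)^2 * (‖p.1 - p.2‖:ℂ)^2 / (4*(ε:ℂ)))
          = ((-(4*ε)⁻¹ * ‖p.1-p.2‖^2 : ℝ) : ℂ) := by
        have hi : ((-I)^2 : ℂ) = -1 := by
          rw [neg_pow, Complex.I_sq]; norm_num
        rw [hi]
        push_cast
        field_simp
      have e3 : ((Module.finrank ℝ (Euc d) : ℂ)/2) = (((d:ℝ)/2 : ℝ) : ℂ) := by
        rw [finrank_euclideanSpace_fin]; push_cast; ring
      rw [e1, e2, e3]
      rw [Complex.norm_cpow_eq_rpow_re_of_pos (div_pos Real.pi_pos hε), Complex.norm_exp]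
      rw [Complex.ofReal_re, Complex.ofReal_re]
    have hfub : (∫ ξ : Euc d, ((Real.exp (-ε * ‖ξ‖^2) : ℝ) : ℂ) * (hat ξ * (starRingEnd ℂ) (hat ξ)))
        = ∫ p : Euc d × Euc d, H p ∂((volume : Measure (Euc d)).prod volume) := by
      have step1 : (fun ξ : Euc d => ((Real.exp (-ε * ‖ξ‖^2) : ℝ) : ℂ) * (hat ξ * (starRingEnd ℂ) (hat ξ)))
          = fun ξ : Euc d => ∫ p : Euc d × Euc d, ((Real.exp (-ε * ‖ξ‖^2) : ℝ) : ℂ) *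
              ((f p.1 * Complex.exp (-(I * dotC p.1 ξ))) *
               ((starRingEnd ℂ) (f p.2) * Complex.exp (I * dotC p.2 ξ)))
              ∂((volume : Measure (Euc d)).prod volume) := by
        funext ξ
        rw [hhat]
        simp only
        rw [conj_hatF]
        rw [← integral_prod_mul]
        exact (integral_const_mul _ _).symm
      rw [step1]
      have hGG : Integrable (Function.uncurry fun (ξ : Euc d) (p : Euc d × Euc d) =>
          ((Real.exp (-ε * ‖ξ‖^2) : ℝ) : ℂ) * ((f p.1 * Complex.exp (-(I * dotC p.1 ξ))) *
            ((starRingEnd ℂ) (f p.2) * Complex.exp (I * dotC p.2 ξ))))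
          ((volume : Measure (Euc d)).prod ((volume : Measure (Euc d)).prod volume)) := by
        apply Integrable.mono' ((integrable_gaussE hε).mul_prod (hfi.norm.mul_prod hfi.norm))
        · apply Continuous.aestronglyMeasurable
          refine Continuous.mul ?_ (Continuous.mul (Continuous.mul ?_ ?_) (Continuous.mul ?_ ?_))
          · exact Complex.continuous_ofReal.comp (Real.continuous_exp.comp
              (continuous_const.mul ((continuous_norm.comp continuous_fst).pow 2)))
          · exact hf.comp (continuous_fst.comp continuous_snd)
          · exact Complex.continuous_exp.comp ((continuous_const.mul (continuous_dotC.comp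
              ((continuous_fst.comp continuous_snd).prodMk continuous_fst))).neg)
          · exact continuous_star.comp (hf.comp (continuous_snd.comp continuous_snd))
          · exact Complex.continuous_exp.comp (continuous_const.mul (continuous_dotC.comp
              ((continuous_snd.comp continuous_snd).prodMk continuous_fst)))
        · filter_upwards with z
          rw [Function.uncurry]
          simp only [norm_mul, RCLike.norm_conj, norm_exp_dotC', norm_exp_dotC,
            Complex.norm_real, Real.norm_eq_abs, Real.abs_exp, mul_one]
          exact le_rfl
      rw [integral_integral_swap hGG]
      have step3 : (fun p : Euc d × Euc d => ∫ ξ : Euc d,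
          ((Real.exp (-ε * ‖ξ‖^2) : ℝ) : ℂ) * ((f p.1 * Complex.exp (-(I * dotC p.1 ξ))) *
            ((starRingEnd ℂ) (f p.2) * Complex.exp (I * dotC p.2 ξ)))) = H := by
        funext p
        have hptw : (fun ξ : Euc d => ((Real.exp (-ε * ‖ξ‖^2) : ℝ) : ℂ) *
            ((f p.1 * Complex.exp (-(I * dotC p.1 ξ))) *
             ((starRingEnd ℂ) (f p.2) * Complex.exp (I * dotC p.2 ξ))))
            = fun ξ : Euc d => (f p.1 * (starRingEnd ℂ) (f p.2)) *
              Complex.exp (-(ε:ℂ) * (‖ξ‖:ℂ)^2 + (-I) * ((inner ℝ (p.1 - p.2) ξ : ℝ) : ℂ)) := by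
          funext ξ
          rw [Complex.ofReal_exp]
          have eexp : ((-ε * ‖ξ‖^2 : ℝ) : ℂ) + (-(I * dotC p.1 ξ)) + I * dotC p.2 ξ
              = -(ε:ℂ) * (‖ξ‖:ℂ)^2 + (-I) * ((inner ℝ (p.1 - p.2) ξ : ℝ) : ℂ) := by
            simp only [dotC, inner_sub_left]
            push_cast
            ring
          rw [← eexp, Complex.exp_add, Complex.exp_add]
          ring
        rw [hptw]
        rw [MeasureTheory.integral_const_mul]
        rw [hH]
        simp only
        congr 1
        exact GaussianFourier.integral_cexp_neg_mul_sq_norm_add (V := Euc d)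
          (b := (ε:ℂ)) (by simpa) (-I) (p.1 - p.2)
      rw [step3]
    -- pass to real parts
    have hptG : (fun ξ : Euc d => ((Real.exp (-ε * ‖ξ‖^2) : ℝ) : ℂ) * (hat ξ * (starRingEnd ℂ) (hat ξ)))
        = fun ξ : Euc d => ((Real.exp (-ε * ‖ξ‖^2) * ‖hat ξ‖^2 : ℝ) : ℂ) := by
      funext ξ
      rw [Complex.mul_conj, ← Complex.ofReal_mul]
      congr 1
      rw [Complex.normSq_eq_norm_sq]
    rw [hptG] at hfub
    have hint_real : Integrable (fun ξ : Euc d => Real.exp (-ε * ‖ξ‖^2) * ‖hat ξ‖^2) := by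
      apply Integrable.mono' ((integrable_gaussE hε).mul_const (B^2))
      · exact ((Real.continuous_exp.comp (continuous_const.mul (continuous_norm.pow 2))).mul
          (hatc.norm.pow 2)).aestronglyMeasurable
      · filter_upwards with ξ
        rw [Real.norm_eq_abs, _root_.abs_of_nonneg (by positivity)]
        have h2 : ‖hat ξ‖^2 ≤ B^2 := by
          have := hhatle ξ
          nlinarith [norm_nonneg (hat ξ)]
        exact mul_le_mul_of_nonneg_left h2 (Real.exp_pos _).le
    have hofr : (∫ ξ : Euc d, ((Real.exp (-ε * ‖ξ‖^2) * ‖hat ξ‖^2 : ℝ) : ℂ))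
        = (((∫ ξ : Euc d, Real.exp (-ε * ‖ξ‖^2) * ‖hat ξ‖^2) : ℝ) : ℂ) :=
      Complex.ofRealCLM.integral_comp_comm hint_real
    rw [hofr] at hfub
    have hre : (∫ ξ : Euc d, Real.exp (-ε * ‖ξ‖^2) * ‖hat ξ‖^2)
        = (∫ p : Euc d × Euc d, H p ∂((volume : Measure (Euc d)).prod volume)).re := by
      rw [← hfub, Complex.ofReal_re]
    -- integrable majorant on the product
    have hDint : Integrable (fun z : Euc d × Euc d => Kε (z.1 - z.2) * (Cf * ‖f z.2‖))
        ((volume : Measure (Euc d)).prod volume) := by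
      have base : Integrable (fun q : Euc d × Euc d => Kε q.1 * (Cf * ‖f q.2‖))
          ((volume : Measure (Euc d)).prod volume) :=
        hKint.mul_prod (hfi.norm.const_mul Cf)
      exact ((measurePreserving_sub_prod (volume : Measure (Euc d)) volume).integrable_comp
        base.aestronglyMeasurable).mpr base
    have hNint : Integrable (fun p : Euc d × Euc d => ‖f p.1‖ * ‖f p.2‖ * Kε (p.1 - p.2))
        ((volume : Measure (Euc d)).prod volume) := by
      apply Integrable.mono' hDint
      · exact (((hf.comp continuous_fst).norm.mul (hf.comp continuous_snd).norm).mul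
          (hKcont.comp (continuous_fst.sub continuous_snd))).aestronglyMeasurable
      · filter_upwards with p
        rw [Real.norm_eq_abs, _root_.abs_of_nonneg (by positivity)]
        calc ‖f p.1‖ * ‖f p.2‖ * Kε (p.1 - p.2) = ‖f p.1‖ * (‖f p.2‖ * Kε (p.1 - p.2)) := by ring
          _ ≤ Cf * (‖f p.2‖ * Kε (p.1 - p.2)) :=
            mul_le_mul_of_nonneg_right (hCf p.1) (by positivity)
          _ = Kε (p.1 - p.2) * (Cf * ‖f p.2‖) := by ring
    have hDval : (∫ z : Euc d × Euc d, Kε (z.1 - z.2) * (Cf * ‖f z.2‖)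
        ∂((volume : Measure (Euc d)).prod volume)) = (2*Real.pi)^d * (Cf * B) := by
      rw [MeasureTheory.integral_prod_symm _ hDint]
      have inner1 : ∀ y : Euc d, (∫ x : Euc d, Kε (x - y) * (Cf * ‖f y‖))
          = (2*Real.pi)^d * (Cf * ‖f y‖) := by
        intro y
        rw [MeasureTheory.integral_mul_const]
        rw [integral_sub_right_eq_self Kε y]
        rw [hKval]
      simp only [inner1]
      rw [MeasureTheory.integral_const_mul]
      rw [MeasureTheory.integral_const_mul]
    rw [hre]
    calc (∫ p : Euc d × Euc d, H p ∂((volume : Measure (Euc d)).prod volume)).re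
        ≤ ‖∫ p : Euc d × Euc d, H p ∂((volume : Measure (Euc d)).prod volume)‖ := by
          exact Complex.re_le_norm _
      _ ≤ ∫ p : Euc d × Euc d, ‖H p‖ ∂((volume : Measure (Euc d)).prod volume) :=
          norm_integral_le_integral_norm _
      _ = ∫ p : Euc d × Euc d, ‖f p.1‖ * ‖f p.2‖ * Kε (p.1 - p.2)
          ∂((volume : Measure (Euc d)).prod volume) := by
          congr 1
          funext p
          exact hnormH p
      _ ≤ ∫ z : Euc d × Euc d, Kε (z.1 - z.2) * (Cf * ‖f z.2‖)
          ∂((volume : Measure (Euc d)).prod volume) := by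
          apply integral_mono hNint hDint
          intro p
          calc ‖f p.1‖ * ‖f p.2‖ * Kε (p.1 - p.2) = ‖f p.1‖ * (‖f p.2‖ * Kε (p.1 - p.2)) := by ring
            _ ≤ Cf * (‖f p.2‖ * Kε (p.1 - p.2)) :=
              mul_le_mul_of_nonneg_right (hCf p.1) (by positivity)
            _ = Kε (p.1 - p.2) * (Cf * ‖f p.2‖) := by ring
      _ = M := by rw [hDval, hM]

  -- conclusion via Fatou
  refine ⟨hatc.aestronglyMeasurable, ?_⟩
  rw [eLpNorm_eq_lintegral_rpow_enorm_toReal (by norm_num) (by norm_num)]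
  have h2 : (2 : ℝ≥0∞).toReal = (2:ℝ) := by norm_num
  rw [h2]
  have hbound : (∫⁻ ξ : Euc d, (‖hat ξ‖₊ : ℝ≥0∞) ^ (2:ℝ)) ≤ ENNReal.ofReal M := by
    set Gn : ℕ → Euc d → ℝ≥0∞ :=
      fun n ξ => ENNReal.ofReal (Real.exp (-((n:ℝ)+1)⁻¹ * ‖ξ‖^2) * ‖hat ξ‖^2) with hGn
    have hpt : ∀ ξ : Euc d, (‖hat ξ‖₊ : ℝ≥0∞) ^ (2:ℝ) = Filter.liminf (fun n => Gn n ξ) atTop := by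
      intro ξ
      have htend : Filter.Tendsto (fun n : ℕ => Gn n ξ) atTop
          (nhds (ENNReal.ofReal (‖hat ξ‖^2))) := by
        apply ENNReal.tendsto_ofReal
        have h0 : Filter.Tendsto (fun n : ℕ => -((n:ℝ)+1)⁻¹ * ‖ξ‖^2) atTop (nhds 0) := by
          have := tendsto_one_div_add_atTop_nhds_zero_nat.neg.mul_const (‖ξ‖^2)
          simpa [one_div] using this
        have h1 := (Real.continuous_exp.continuousAt.tendsto.comp h0).mul_const (‖hat ξ‖^2)
        simpa using h1
      rw [htend.liminf_eq]
      rw [ENNReal.ofReal_pow (norm_nonneg _), ofReal_norm, enorm_eq_nnnorm]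
      rw [ENNReal.rpow_two]
    calc (∫⁻ ξ : Euc d, (‖hat ξ‖₊ : ℝ≥0∞) ^ (2:ℝ))
        = ∫⁻ ξ, Filter.liminf (fun n => Gn n ξ) atTop := by
          apply lintegral_congr; intro ξ; exact hpt ξ
      _ ≤ Filter.liminf (fun n => ∫⁻ ξ, Gn n ξ) atTop := by
          apply lintegral_liminf_le
          intro n
          exact ((Real.continuous_exp.comp (continuous_const.mul (continuous_norm.pow 2))).mul
            (hatc.norm.pow 2)).measurable.ennreal_ofReal
      _ ≤ ENNReal.ofReal M := by
          have : ∀ n : ℕ, (∫⁻ ξ, Gn n ξ) ≤ ENNReal.ofReal M := by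
            intro n
            have hεn : (0:ℝ) < ((n:ℝ)+1)⁻¹ := by positivity
            have hint : Integrable (fun ξ : Euc d => Real.exp (-((n:ℝ)+1)⁻¹ * ‖ξ‖^2) * ‖hat ξ‖^2) := by
              apply Integrable.mono' ((integrable_gaussE hεn).mul_const (B^2))
              · exact ((Real.continuous_exp.comp (continuous_const.mul (continuous_norm.pow 2))).mul
                  (hatc.norm.pow 2)).aestronglyMeasurable
              · filter_upwards with ξ
                have h1 : (0:ℝ) ≤ Real.exp (-((n:ℝ)+1)⁻¹ * ‖ξ‖^2) := (Real.exp_pos _).le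
                rw [Real.norm_eq_abs, _root_.abs_of_nonneg (by positivity)]
                have h2 : ‖hat ξ‖^2 ≤ B^2 := by
                  have := hhatle ξ
                  nlinarith [norm_nonneg (hat ξ)]
                exact mul_le_mul_of_nonneg_left h2 h1
            rw [← ofReal_integral_eq_lintegral_ofReal hint]
            · exact ENNReal.ofReal_le_ofReal (key _ hεn)
            · filter_upwards with ξ
              positivity
          calc Filter.liminf (fun n => ∫⁻ ξ, Gn n ξ) atTop
              ≤ Filter.liminf (fun _ : ℕ => ENNReal.ofReal M) atTop :=
                Filter.liminf_le_liminf (Filter.Eventually.of_forall this)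
            _ = ENNReal.ofReal M := Filter.liminf_const _
  calc (∫⁻ ξ : Euc d, (‖hat ξ‖₊ : ℝ≥0∞) ^ (2:ℝ)) ^ (1/(2:ℝ))
      ≤ (ENNReal.ofReal M) ^ (1/(2:ℝ)) := by
        apply ENNReal.rpow_le_rpow hbound (by norm_num)
    _ < ⊤ := by
        apply ENNReal.rpow_lt_top_of_nonneg (by norm_num)
        exact ENNReal.ofReal_ne_top

lemma dotC_comm {d : ℕ} (x u : Euc d) : dotC x u = dotC u x := by
  rw [dotC, dotC, real_inner_comm]

lemma integrable_FF {d : ℕ} {f g : Euc d → ℂ} (hf : Continuous f) (hcf : HasCompactSupport f)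
    (hg : Continuous g) (hcg : HasCompactSupport g) :
    Integrable (fun ξ : Euc d =>
      (∫ x : Euc d, f x * Complex.exp (-(I * dotC x ξ))) *
        (starRingEnd ℂ) (∫ x : Euc d, g x * Complex.exp (-(I * dotC x ξ))))
      (volume : Measure (Euc d)) := by
  have hF := memL2_hat hf hcf
  have hG := memL2_hat hg hcg
  have h := L2.integrable_inner (𝕜 := ℂ) (hG.toLp _) (hF.toLp _)
  apply h.congr
  filter_upwards [hF.coeFn_toLp, hG.coeFn_toLp] with ξ h1 h2
  rw [RCLike.inner_apply, h1, h2]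

lemma hatphi_one {d : ℕ} (hd : 1 ≤ d) (φ : SchwartzMap (Euc d) ℂ)
    (hφ : ∀ x ∈ Metric.ball (0 : Euc d) 2,
      (∫ u : Euc d, φ u * Complex.exp (-(Complex.I * dotC x u))) = 1) :
    ∀ x : Euc d, ‖x‖ ≤ 2 → (∫ u : Euc d, φ u * Complex.exp (-(Complex.I * dotC x u))) = 1 := by
  haveI : Nontrivial (Euc d) := by
    apply Module.nontrivial_of_finrank_pos (R := ℝ)
    rw [finrank_euclideanSpace_fin]; omega
  have hcont : Continuous (fun x : Euc d => ∫ u : Euc d, φ u * Complex.exp (-(I * dotC x u))) := by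
    have he : (fun x : Euc d => ∫ u : Euc d, φ u * Complex.exp (-(I * dotC x u)))
        = fun x : Euc d => ∫ u : Euc d, φ u * Complex.exp (-(I * dotC u x)) := by
      funext x
      congr 1
      funext u
      rw [dotC_comm]
    rw [he]
    exact hatF_continuous φ.integrable
  intro x hx
  have hxcl : x ∈ closure (Metric.ball (0 : Euc d) 2) := by
    rw [closure_ball (0 : Euc d) (by norm_num : (2:ℝ) ≠ 0)]
    rwa [mem_closedBall_zero_iff]
  exact Set.EqOn.closure (fun y hy => hφ y hy) hcont continuous_const hxcl

lemma J_eq {d : ℕ} (R : ℝ) (hR : 0 < R) (φ : SchwartzMap (Euc d) ℂ) (w : Euc d) :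
    (∫ η : Euc d, ((R ^ d : ℝ) : ℂ) * φ (R • η) * Complex.exp (-(I * dotC w η)))
      = ∫ u : Euc d, φ u * Complex.exp (-(I * dotC (R⁻¹ • w) u)) := by
  have hψ : ∀ η : Euc d, ((R ^ d : ℝ) : ℂ) * φ (R • η) * Complex.exp (-(I * dotC w η))
      = ((R ^ d : ℝ) : ℂ) * ((fun u : Euc d => φ u * Complex.exp (-(I * dotC (R⁻¹ • w) u))) (R • η)) := by
    intro η
    simp only
    rw [mul_assoc]
    congr 3
    rw [dotC, dotC, real_inner_smul_left, real_inner_smul_right, ← mul_assoc,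
      inv_mul_cancel₀ hR.ne', one_mul]
  have h1 : (∫ η : Euc d, ((R ^ d : ℝ) : ℂ) * φ (R • η) * Complex.exp (-(I * dotC w η)))
      = ((R ^ d : ℝ) : ℂ) * ∫ η : Euc d,
          (fun u : Euc d => φ u * Complex.exp (-(I * dotC (R⁻¹ • w) u))) (R • η) := by
    rw [← MeasureTheory.integral_const_mul]
    congr 1
    funext η
    exact hψ η
  rw [h1, MeasureTheory.Measure.integral_comp_smul (μ := volume)
    (f := fun u : Euc d => φ u * Complex.exp (-(I * dotC (R⁻¹ • w) u))) (R := R)]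
  rw [_root_.abs_of_nonneg (by positivity : (0:ℝ) ≤ (R ^ Module.finrank ℝ (Euc d))⁻¹)]
  rw [Complex.real_smul]
  rw [← mul_assoc, ← Complex.ofReal_mul, finrank_euclideanSpace_fin,
    mul_inv_cancel₀ (by positivity)]
  simp

lemma hcs_of_support_subset {d : ℕ} {f : Euc d → ℂ} {x₀ : Euc d} {R : ℝ}
    (h : Function.support f ⊆ Metric.closedBall x₀ R) : HasCompactSupport f :=
  HasCompactSupport.intro (isCompact_closedBall x₀ R)
    (fun x hx => by by_contra hfx; exact hx (h (Function.mem_support.mpr hfx)))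

lemma F_eq_prod {d : ℕ} (f g : Euc d → ℂ) (ζ : Euc d) :
    (∫ x : Euc d, f x * Complex.exp (-(I * dotC x ζ))) *
      (starRingEnd ℂ) (∫ x : Euc d, g x * Complex.exp (-(I * dotC x ζ)))
    = ∫ p : Euc d × Euc d, (f p.1 * (starRingEnd ℂ) (g p.2)) *
        Complex.exp (-(I * dotC (p.1 - p.2) ζ)) ∂((volume : Measure (Euc d)).prod volume) := by
  rw [conj_hatF, ← integral_prod_mul]
  congr 1
  funext p
  have he : Complex.exp (-(I * dotC p.1 ζ)) * Complex.exp (I * dotC p.2 ζ)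
      = Complex.exp (-(I * dotC (p.1 - p.2) ζ)) := by
    rw [← Complex.exp_add]
    congr 1
    simp only [dotC, inner_sub_left]
    push_cast
    ring
  calc f p.1 * Complex.exp (-(I * dotC p.1 ζ)) *
        ((starRingEnd ℂ) (g p.2) * Complex.exp (I * dotC p.2 ζ))
      = (f p.1 * (starRingEnd ℂ) (g p.2)) *
        (Complex.exp (-(I * dotC p.1 ζ)) * Complex.exp (I * dotC p.2 ζ)) := by ring
    _ = _ := by rw [he]

lemma key5 {d : ℕ} (hd : 1 ≤ d) (R : ℝ) (hR : 0 < R) (x₀ : Euc d)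
    (φ : SchwartzMap (Euc d) ℂ)
    (hφ : ∀ x ∈ Metric.ball (0 : Euc d) 2,
      (∫ u : Euc d, φ u * Complex.exp (-(Complex.I * dotC x u))) = 1)
    (f g : Euc d → ℂ) (hf : Continuous f) (hg : Continuous g)
    (hsf : Function.support f ⊆ Metric.closedBall x₀ R)
    (hsg : Function.support g ⊆ Metric.closedBall x₀ R) (ξ : Euc d) :
    (∫ η : Euc d, (((R ^ d : ℝ) : ℂ) * φ (R • η)) *
        ((∫ x : Euc d, f x * Complex.exp (-(I * dotC x (ξ + η)))) *
         (starRingEnd ℂ) (∫ x : Euc d, g x * Complex.exp (-(I * dotC x (ξ + η))))))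
      = (∫ x : Euc d, f x * Complex.exp (-(I * dotC x ξ))) *
         (starRingEnd ℂ) (∫ x : Euc d, g x * Complex.exp (-(I * dotC x ξ))) := by
  have hcf := hcs_of_support_subset hsf
  have hcg := hcs_of_support_subset hsg
  have hfi : Integrable f := hf.integrable_of_hasCompactSupport hcf
  have hgi : Integrable g := hg.integrable_of_hasCompactSupport hcg
  have hφRint : Integrable (fun η : Euc d => (R^d : ℝ) * ‖φ (R • η)‖) :=
    (((integrable_comp_smul_iff (volume : Measure (Euc d)) (fun u : Euc d => (φ u : ℂ))
      hR.ne').mpr φ.integrable).norm.const_mul (R^d))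
  have step1 : (fun η : Euc d => (((R ^ d : ℝ) : ℂ) * φ (R • η)) *
        ((∫ x : Euc d, f x * Complex.exp (-(I * dotC x (ξ + η)))) *
         (starRingEnd ℂ) (∫ x : Euc d, g x * Complex.exp (-(I * dotC x (ξ + η)))))) =
      fun η : Euc d => ∫ p : Euc d × Euc d, (((R ^ d : ℝ) : ℂ) * φ (R • η)) *
        ((f p.1 * (starRingEnd ℂ) (g p.2)) * Complex.exp (-(I * dotC (p.1 - p.2) (ξ + η))))
        ∂((volume : Measure (Euc d)).prod volume) := by
    funext η
    rw [F_eq_prod f g (ξ + η)]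
    exact (MeasureTheory.integral_const_mul _ _).symm
  rw [step1]
  have hint : Integrable (Function.uncurry fun (η : Euc d) (p : Euc d × Euc d) =>
      (((R ^ d : ℝ) : ℂ) * φ (R • η)) *
        ((f p.1 * (starRingEnd ℂ) (g p.2)) * Complex.exp (-(I * dotC (p.1 - p.2) (ξ + η)))))
      ((volume : Measure (Euc d)).prod ((volume : Measure (Euc d)).prod volume)) := by
    apply Integrable.mono' (hφRint.mul_prod (hfi.norm.mul_prod hgi.norm))
    · apply Continuous.aestronglyMeasurable
      refine Continuous.mul (continuous_const.mul
        (φ.continuous.comp (continuous_fst.const_smul R))) (Continuous.mul ?_ ?_)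
      · exact (hf.comp (continuous_fst.comp continuous_snd)).mul
          (continuous_star.comp (hg.comp (continuous_snd.comp continuous_snd)))
      · exact Complex.continuous_exp.comp ((continuous_const.mul (continuous_dotC.comp
          (((continuous_fst.comp continuous_snd).sub
            (continuous_snd.comp continuous_snd)).prodMk
            (continuous_const.add continuous_fst)))).neg)
    · filter_upwards with z
      rw [Function.uncurry]
      simp only [norm_mul, RCLike.norm_conj, norm_exp_dotC', Complex.norm_real,
        Real.norm_eq_abs, mul_one]
      rw [_root_.abs_of_nonneg (by positivity : (0:ℝ) ≤ R^d)]
  rw [integral_integral_swap hint]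
  have step3 : (fun p : Euc d × Euc d => ∫ η : Euc d,
      (((R ^ d : ℝ) : ℂ) * φ (R • η)) *
        ((f p.1 * (starRingEnd ℂ) (g p.2)) * Complex.exp (-(I * dotC (p.1 - p.2) (ξ + η)))))
      = fun p : Euc d × Euc d => (f p.1 * (starRingEnd ℂ) (g p.2)) *
          Complex.exp (-(I * dotC (p.1 - p.2) ξ)) := by
    funext p
    have hsplit : (fun η : Euc d => (((R ^ d : ℝ) : ℂ) * φ (R • η)) *
        ((f p.1 * (starRingEnd ℂ) (g p.2)) * Complex.exp (-(I * dotC (p.1 - p.2) (ξ + η))))) =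
        fun η : Euc d => ((f p.1 * (starRingEnd ℂ) (g p.2)) *
          Complex.exp (-(I * dotC (p.1 - p.2) ξ))) *
          (((R ^ d : ℝ) : ℂ) * φ (R • η) * Complex.exp (-(I * dotC (p.1 - p.2) η))) := by
      funext η
      have he : Complex.exp (-(I * dotC (p.1 - p.2) (ξ + η)))
          = Complex.exp (-(I * dotC (p.1 - p.2) ξ)) * Complex.exp (-(I * dotC (p.1 - p.2) η)) := by
        rw [← Complex.exp_add]
        congr 1
        simp only [dotC, inner_add_right]
        push_cast
        ring
      rw [he]
      ring
    rw [hsplit]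
    rw [MeasureTheory.integral_const_mul]
    rcases eq_or_ne (f p.1 * (starRingEnd ℂ) (g p.2)) 0 with h0 | h0
    · rw [h0]
      simp
    · have hp1 : f p.1 ≠ 0 := fun h => h0 (by rw [h, zero_mul])
      have hp2 : (starRingEnd ℂ) (g p.2) ≠ 0 := fun h => h0 (by rw [h, mul_zero])
      have hp2' : g p.2 ≠ 0 := fun h => hp2 (by rw [h, map_zero])
      have hd1 : dist p.1 x₀ ≤ R := (hsf (Function.mem_support.mpr hp1))
      have hd2 : dist p.2 x₀ ≤ R := (hsg (Function.mem_support.mpr hp2'))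
      have hw : ‖p.1 - p.2‖ ≤ 2 * R := by
        rw [← dist_eq_norm]
        calc dist p.1 p.2 ≤ dist p.1 x₀ + dist x₀ p.2 := dist_triangle _ _ _
          _ = dist p.1 x₀ + dist p.2 x₀ := by rw [dist_comm x₀ p.2]
          _ ≤ 2 * R := by linarith
      have hJ : (∫ η : Euc d, ((R ^ d : ℝ) : ℂ) * φ (R • η) *
          Complex.exp (-(I * dotC (p.1 - p.2) η))) = 1 := by
        rw [J_eq R hR φ (p.1 - p.2)]
        apply hatphi_one hd φ hφ
        rw [norm_smul, norm_inv, Real.norm_eq_abs, _root_.abs_of_nonneg hR.le]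
        calc R⁻¹ * ‖p.1 - p.2‖ ≤ R⁻¹ * (2 * R) := by
              apply mul_le_mul_of_nonneg_left hw (by positivity)
          _ = 2 := by field_simp
      rw [hJ, mul_one]
  rw [step3]
  exact (F_eq_prod f g ξ).symm

/-- Smoothing of a Fourier multiplier by spatial localization:
`1_{B_R} m(D) 1_{B_R} = 1_{B_R} m_R(D) 1_{B_R}` with `m_R = φ_R * m`, stated weakly via the
pairings `⟨g, m(D) f⟩ = (2π)^{-d} ∫ m ξ f̂(ξ) conj(ĝ(ξ)) dξ` for `f, g` continuous and supported
in the ball `B_R = B(x₀, R)`. -/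
theorem stmt_16 (d : ℕ) (hd : 1 ≤ d) (R : ℝ) (hR : 0 < R) (x₀ : Euc d)
    (m : Euc d → ℂ) (hm : MemLp m ⊤ (volume : Measure (Euc d)))
    (φ : SchwartzMap (Euc d) ℂ)
    (hφ : ∀ x ∈ Metric.ball (0 : Euc d) 2,
      (∫ u : Euc d, φ u * Complex.exp (-(Complex.I * dotC x u))) = 1) :
    ∀ f g : Euc d → ℂ, Continuous f → Continuous g →
      Function.support f ⊆ Metric.closedBall x₀ R →
      Function.support g ⊆ Metric.closedBall x₀ R →
      (∫ ξ : Euc d, m ξ *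
          (∫ x : Euc d, f x * Complex.exp (-(Complex.I * dotC x ξ))) *
          (starRingEnd ℂ) (∫ x : Euc d, g x * Complex.exp (-(Complex.I * dotC x ξ)))) =
      ∫ ξ : Euc d,
          (∫ η : Euc d, ((R ^ d : ℝ) : ℂ) * φ (R • η) * m (ξ - η)) *
          (∫ x : Euc d, f x * Complex.exp (-(Complex.I * dotC x ξ))) *
          (starRingEnd ℂ) (∫ x : Euc d, g x * Complex.exp (-(Complex.I * dotC x ξ))) := by
  intro f g hf hg hsf hsg
  have hcf := hcs_of_support_subset hsf
  have hcg := hcs_of_support_subset hsg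
  have hfi : Integrable f := hf.integrable_of_hasCompactSupport hcf
  have hgi : Integrable g := hg.integrable_of_hasCompactSupport hcg
  have hFcont : Continuous (fun ξ : Euc d =>
      (∫ x : Euc d, f x * Complex.exp (-(I * dotC x ξ))) *
        (starRingEnd ℂ) (∫ x : Euc d, g x * Complex.exp (-(I * dotC x ξ)))) :=
    (hatF_continuous hfi).mul (continuous_star.comp (hatF_continuous hgi))
  have hFint := integrable_FF hf hcf hg hcg
  obtain ⟨C, hC⟩ : ∃ C : ℝ, ∀ᵐ ξ : Euc d ∂(volume : Measure (Euc d)), ‖m ξ‖ ≤ C := by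
    refine ⟨(eLpNormEssSup m (volume : Measure (Euc d))).toReal, ?_⟩
    have htop : eLpNormEssSup m (volume : Measure (Euc d)) ≠ ⊤ := by
      have h2 := hm.2
      rw [eLpNorm_exponent_top] at h2
      exact h2.ne
    filter_upwards [enorm_ae_le_eLpNormEssSup m (volume : Measure (Euc d))] with ξ hξ
    have h3 := ENNReal.toReal_mono htop hξ
    simpa using h3
  have hφRcont : Continuous (fun η : Euc d => ((R ^ d : ℝ) : ℂ) * φ (R • η)) :=
    continuous_const.mul (φ.continuous.comp (continuous_id.const_smul R))
  have hφRint : Integrable (fun η : Euc d => ((R ^ d : ℝ) : ℂ) * φ (R • η)) :=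
    ((integrable_comp_smul_iff (volume : Measure (Euc d)) (fun u : Euc d => (φ u : ℂ))
      hR.ne').mpr φ.integrable).const_mul _
  -- the translated product function and its integrability
  have hQaesm : AEStronglyMeasurable (fun z : Euc d × Euc d =>
      (((R ^ d : ℝ) : ℂ) * φ (R • z.1)) * m z.2 *
        ((∫ x : Euc d, f x * Complex.exp (-(I * dotC x (z.2 + z.1)))) *
         (starRingEnd ℂ) (∫ x : Euc d, g x * Complex.exp (-(I * dotC x (z.2 + z.1))))))
      ((volume : Measure (Euc d)).prod volume) := by
    have h1 : AEStronglyMeasurable (fun z : Euc d × Euc d => m z.2)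
        ((volume : Measure (Euc d)).prod volume) := hm.aestronglyMeasurable.comp_snd
    exact (((hφRcont.comp continuous_fst).aestronglyMeasurable).mul h1).mul
      ((hFcont.comp (continuous_snd.add continuous_fst)).aestronglyMeasurable)
  have hCae : ∀ᵐ z : Euc d × Euc d ∂((volume : Measure (Euc d)).prod volume), ‖m z.2‖ ≤ C :=
    (MeasureTheory.Measure.quasiMeasurePreserving_snd
      (μ := (volume : Measure (Euc d))) (ν := (volume : Measure (Euc d)))).tendsto_ae.eventually hC
  have hbndint : Integrable (fun z : Euc d × Euc d =>
      ‖((R ^ d : ℝ) : ℂ) * φ (R • z.1)‖ *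
        (C * ‖(∫ x : Euc d, f x * Complex.exp (-(I * dotC x (z.2 + z.1)))) *
          (starRingEnd ℂ) (∫ x : Euc d, g x * Complex.exp (-(I * dotC x (z.2 + z.1))))‖))
      ((volume : Measure (Euc d)).prod volume) := by
    have base : Integrable (fun q : Euc d × Euc d =>
        ‖((R ^ d : ℝ) : ℂ) * φ (R • q.1)‖ *
          (C * ‖(∫ x : Euc d, f x * Complex.exp (-(I * dotC x q.2))) *
            (starRingEnd ℂ) (∫ x : Euc d, g x * Complex.exp (-(I * dotC x q.2)))‖))
        ((volume : Measure (Euc d)).prod volume) :=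
      hφRint.norm.mul_prod (hFint.norm.const_mul C)
    exact ((measurePreserving_prod_add_right (volume : Measure (Euc d))
      volume).integrable_comp base.aestronglyMeasurable).mpr base
  have hQ : Integrable (fun z : Euc d × Euc d =>
      (((R ^ d : ℝ) : ℂ) * φ (R • z.1)) * m z.2 *
        ((∫ x : Euc d, f x * Complex.exp (-(I * dotC x (z.2 + z.1)))) *
         (starRingEnd ℂ) (∫ x : Euc d, g x * Complex.exp (-(I * dotC x (z.2 + z.1))))))
      ((volume : Measure (Euc d)).prod volume) := by
    apply Integrable.mono' hbndint hQaesm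
    filter_upwards [hCae] with z hz
    rw [norm_mul, norm_mul, mul_assoc]
    exact mul_le_mul_of_nonneg_left
      (mul_le_mul_of_nonneg_right hz (norm_nonneg _)) (norm_nonneg _)
  have hW : Integrable (fun z : Euc d × Euc d =>
      (((R ^ d : ℝ) : ℂ) * φ (R • z.2)) * m (z.1 - z.2) *
        ((∫ x : Euc d, f x * Complex.exp (-(I * dotC x z.1))) *
         (starRingEnd ℂ) (∫ x : Euc d, g x * Complex.exp (-(I * dotC x z.1)))))
      ((volume : Measure (Euc d)).prod volume) := by
    have h1 := ((measurePreserving_prod_sub_swap (volume : Measure (Euc d))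
      volume).integrable_comp hQaesm).mpr hQ
    apply h1.congr
    filter_upwards with z
    simp only [Function.comp]
    rw [sub_add_cancel]
  symm
  calc (∫ ξ : Euc d, (∫ η : Euc d, ((R ^ d : ℝ) : ℂ) * φ (R • η) * m (ξ - η)) *
          (∫ x : Euc d, f x * Complex.exp (-(I * dotC x ξ))) *
          (starRingEnd ℂ) (∫ x : Euc d, g x * Complex.exp (-(I * dotC x ξ))))
      = ∫ ξ : Euc d, ∫ η : Euc d, (((R ^ d : ℝ) : ℂ) * φ (R • η)) * m (ξ - η) *
          ((∫ x : Euc d, f x * Complex.exp (-(I * dotC x ξ))) *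
           (starRingEnd ℂ) (∫ x : Euc d, g x * Complex.exp (-(I * dotC x ξ)))) := by
        congr 1
        funext ξ
        rw [mul_assoc]
        rw [← MeasureTheory.integral_mul_const]
    _ = ∫ η : Euc d, ∫ ξ : Euc d, (((R ^ d : ℝ) : ℂ) * φ (R • η)) * m (ξ - η) *
          ((∫ x : Euc d, f x * Complex.exp (-(I * dotC x ξ))) *
           (starRingEnd ℂ) (∫ x : Euc d, g x * Complex.exp (-(I * dotC x ξ)))) :=
        integral_integral_swap hW
    _ = ∫ η : Euc d, ∫ ξ : Euc d, (((R ^ d : ℝ) : ℂ) * φ (R • η)) * m ξ *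
          ((∫ x : Euc d, f x * Complex.exp (-(I * dotC x (ξ + η)))) *
           (starRingEnd ℂ) (∫ x : Euc d, g x * Complex.exp (-(I * dotC x (ξ + η))))) := by
        congr 1
        funext η
        calc (∫ ξ : Euc d, (((R ^ d : ℝ) : ℂ) * φ (R • η)) * m (ξ - η) *
              ((∫ x : Euc d, f x * Complex.exp (-(I * dotC x ξ))) *
               (starRingEnd ℂ) (∫ x : Euc d, g x * Complex.exp (-(I * dotC x ξ)))))
            = ∫ ξ : Euc d, (((R ^ d : ℝ) : ℂ) * φ (R • η)) * m ((ξ + η) - η) *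
              ((∫ x : Euc d, f x * Complex.exp (-(I * dotC x (ξ + η)))) *
               (starRingEnd ℂ) (∫ x : Euc d, g x * Complex.exp (-(I * dotC x (ξ + η))))) :=
              (MeasureTheory.integral_add_right_eq_self (fun ζ : Euc d =>
                (((R ^ d : ℝ) : ℂ) * φ (R • η)) * m (ζ - η) *
                ((∫ x : Euc d, f x * Complex.exp (-(I * dotC x ζ))) *
                 (starRingEnd ℂ) (∫ x : Euc d, g x * Complex.exp (-(I * dotC x ζ))))) η).symm
          _ = _ := by
              congr 1
              funext ξ
              rw [add_sub_cancel_right]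
    _ = ∫ ξ : Euc d, ∫ η : Euc d, (((R ^ d : ℝ) : ℂ) * φ (R • η)) * m ξ *
          ((∫ x : Euc d, f x * Complex.exp (-(I * dotC x (ξ + η)))) *
           (starRingEnd ℂ) (∫ x : Euc d, g x * Complex.exp (-(I * dotC x (ξ + η))))) :=
        integral_integral_swap hQ
    _ = ∫ ξ : Euc d, m ξ *
          (∫ x : Euc d, f x * Complex.exp (-(I * dotC x ξ))) *
          (starRingEnd ℂ) (∫ x : Euc d, g x * Complex.exp (-(I * dotC x ξ))) := by
        congr 1
        funext ξ
        calc (∫ η : Euc d, (((R ^ d : ℝ) : ℂ) * φ (R • η)) * m ξ *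
              ((∫ x : Euc d, f x * Complex.exp (-(I * dotC x (ξ + η)))) *
               (starRingEnd ℂ) (∫ x : Euc d, g x * Complex.exp (-(I * dotC x (ξ + η))))))
            = ∫ η : Euc d, m ξ * ((((R ^ d : ℝ) : ℂ) * φ (R • η)) *
              ((∫ x : Euc d, f x * Complex.exp (-(I * dotC x (ξ + η)))) *
               (starRingEnd ℂ) (∫ x : Euc d, g x * Complex.exp (-(I * dotC x (ξ + η))))))
              := by congr 1; funext η; ring
          _ = m ξ * ∫ η : Euc d, (((R ^ d : ℝ) : ℂ) * φ (R • η)) *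
              ((∫ x : Euc d, f x * Complex.exp (-(I * dotC x (ξ + η)))) *
               (starRingEnd ℂ) (∫ x : Euc d, g x * Complex.exp (-(I * dotC x (ξ + η)))))
              := MeasureTheory.integral_const_mul _ _
          _ = m ξ * ((∫ x : Euc d, f x * Complex.exp (-(I * dotC x ξ))) *
               (starRingEnd ℂ) (∫ x : Euc d, g x * Complex.exp (-(I * dotC x ξ)))) := by
              rw [key5 hd R hR x₀ φ hφ f g hf hg hsf hsg ξ]
          _ = _ := by ring
end
end

section
/- Let d ≥ 1, N ∈ ℕ, R, R' > 0 and L > 0, and let {B(x_k, R)}_{k=1}^N be balls in ℝ^d whose centers are pairwise L-separated, with L ≥ (NR)^γ + 2R + 4R' for some γ > 0. Let B' = B(y, R') be any ball of radius R'. Then dist(B(x_k, R), B') ≥ (NR)^γ / 2 for all but at most one index k ∈ {1, …, N}. Consequently, for any s > 0 with γ s ≥ 1 and NR ≥ 2^{1/γ}, Σ_{k=1}^N (1 + dist(B(x_k, R), B'))^{−s} ≤ 1 + 2^s N (NR)^{−γ s}. -/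
open MeasureTheory Complex Metric Set Filter
open scoped Real ENNReal Topology ComplexConjugate

noncomputable section

/-- Sparse balls: all but at most one ball of a separated family is far from a
fixed ball `B' = B(y, R')`, and the resulting sum bound. -/
theorem stmt_19 (d : ℕ) (hd : 1 ≤ d) (N : ℕ) (R R' L γ : ℝ)
    (hR : 0 < R) (hR' : 0 < R') (hL : 0 < L) (hγ : 0 < γ)
    (x : Fin N → Euc d) (hsep : ∀ j k : Fin N, j ≠ k → L ≤ dist (x j) (x k))
    (hLlarge : ((N : ℝ) * R) ^ γ + 2 * R + 4 * R' ≤ L) (y : Euc d) :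
    (∃ S : Finset (Fin N), S.card ≤ 1 ∧ ∀ k ∉ S,
      ((N : ℝ) * R) ^ γ / 2 ≤ setDist (Metric.closedBall (x k) R) (Metric.closedBall y R')) ∧
    ∀ s : ℝ, 0 < s → 1 ≤ γ * s → (2 : ℝ) ^ (1 / γ) ≤ (N : ℝ) * R →
      ∑ k : Fin N,
          (1 + setDist (Metric.closedBall (x k) R) (Metric.closedBall y R')) ^ (-s) ≤
        1 + 2 ^ s * (N : ℝ) * ((N : ℝ) * R) ^ (-(γ * s)) := by
  classical
  set M : ℝ := ((N : ℝ) * R) ^ γ with hM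
  have hNR0 : (0 : ℝ) ≤ (N : ℝ) * R := mul_nonneg (Nat.cast_nonneg N) hR.le
  have hM0 : 0 ≤ M := Real.rpow_nonneg hNR0 γ
  set D : Fin N → ℝ := fun k =>
    setDist (Metric.closedBall (x k) R) (Metric.closedBall y R') with hD
  have hD0 : ∀ k, 0 ≤ D k := by
    intro k
    apply Real.sInf_nonneg
    rintro t ⟨p, hp, q, hq, rfl⟩
    exact dist_nonneg
  have hDlb : ∀ k, dist (x k) y - R - R' ≤ D k := by
    intro k
    apply le_csInf
    · exact ⟨dist (x k) y, Set.mem_image2_of_mem (Metric.mem_closedBall_self hR.le)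
        (Metric.mem_closedBall_self hR'.le)⟩
    · rintro t ⟨p, hp, q, hq, rfl⟩
      have h1 : dist (x k) p ≤ R := by
        rw [dist_comm]; exact Metric.mem_closedBall.1 hp
      have h2 : dist q y ≤ R' := Metric.mem_closedBall.1 hq
      have := dist_triangle4 (x k) p q y
      linarith
  have hkey : ∀ j k : Fin N, j ≠ k → M / 2 ≤ D j ∨ M / 2 ≤ D k := by
    intro j k hjk
    by_contra h
    push_neg at h
    obtain ⟨h1, h2⟩ := h
    have hjy := hDlb j
    have hky := hDlb k
    have htri := dist_triangle (x j) y (x k)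
    rw [dist_comm y (x k)] at htri
    have := hsep j k hjk
    linarith
  set S : Finset (Fin N) := Finset.univ.filter (fun k => D k < M / 2) with hS
  have hScard : S.card ≤ 1 := by
    rw [Finset.card_le_one]
    intro a ha b hb
    by_contra hab
    rcases hkey a b hab with h | h
    · exact absurd (Finset.mem_filter.1 ha).2 (not_lt.2 h)
    · exact absurd (Finset.mem_filter.1 hb).2 (not_lt.2 h)
  have hSout : ∀ k ∉ S, M / 2 ≤ D k := by
    intro k hk
    have : ¬ D k < M / 2 := fun h => hk (Finset.mem_filter.2 ⟨Finset.mem_univ k, h⟩)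
    linarith [not_lt.1 this]
  refine ⟨⟨S, hScard, hSout⟩, ?_⟩
  intro s hs hγs hNR
  have hNRpos : 0 < (N : ℝ) * R :=
    lt_of_lt_of_le (Real.rpow_pos_of_pos two_pos _) hNR
  have hM2 : (2 : ℝ) ≤ M := by
    have : ((2 : ℝ) ^ (1 / γ)) ^ γ ≤ ((N : ℝ) * R) ^ γ :=
      Real.rpow_le_rpow (Real.rpow_nonneg (by norm_num) _) hNR hγ.le
    rwa [← Real.rpow_mul (by norm_num), one_div, inv_mul_cancel₀ hγ.ne',
      Real.rpow_one] at this
  have hMpos : 0 < M := by linarith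
  set c : ℝ := 2 ^ s * ((N : ℝ) * R) ^ (-(γ * s)) with hc
  have hc0 : 0 ≤ c :=
    mul_nonneg (Real.rpow_nonneg (by norm_num) _) (Real.rpow_nonneg hNR0 _)
  have hbound1 : ∀ k : Fin N, (1 + D k) ^ (-s) ≤ 1 := by
    intro k
    exact Real.rpow_le_one_of_one_le_of_nonpos (by linarith [hD0 k]) (by linarith)
  have hbound2 : ∀ k ∉ S, (1 + D k) ^ (-s) ≤ c := by
    intro k hk
    have h1 : M / 2 ≤ 1 + D k := by linarith [hSout k hk]
    have h2 : (1 + D k) ^ (-s) ≤ (M / 2) ^ (-s) :=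
      Real.rpow_le_rpow_of_nonpos (by linarith) h1 (by linarith)
    have h3 : (M / 2) ^ (-s) = 2 ^ s * M ^ (-s) := by
      rw [Real.div_rpow hM0 (by norm_num), Real.rpow_neg (by norm_num : (0:ℝ) ≤ 2),
        ]
      field_simp
    have h4 : M ^ (-s) = ((N : ℝ) * R) ^ (-(γ * s)) := by
      rw [hM, ← Real.rpow_mul hNR0, mul_neg]
    calc (1 + D k) ^ (-s) ≤ (M / 2) ^ (-s) := h2
      _ = 2 ^ s * M ^ (-s) := h3
      _ = c := by rw [hc, h4]
  have hsplit : ∑ k : Fin N, (1 + D k) ^ (-s) =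
      ∑ k ∈ S, (1 + D k) ^ (-s) + ∑ k ∈ Sᶜ, (1 + D k) ^ (-s) :=
    (Finset.sum_add_sum_compl S _).symm
  have h5 : ∑ k ∈ S, (1 + D k) ^ (-s) ≤ 1 := by
    calc ∑ k ∈ S, (1 + D k) ^ (-s) ≤ ∑ k ∈ S, (1 : ℝ) :=
          Finset.sum_le_sum fun k _ => hbound1 k
      _ = S.card := by simp
      _ ≤ 1 := by exact_mod_cast hScard
  have h6 : ∑ k ∈ Sᶜ, (1 + D k) ^ (-s) ≤ (N : ℝ) * c := by
    calc ∑ k ∈ Sᶜ, (1 + D k) ^ (-s) ≤ ∑ k ∈ Sᶜ, c :=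
          Finset.sum_le_sum fun k hk => hbound2 k (Finset.mem_compl.1 hk)
      _ = (Sᶜ.card : ℝ) * c := by rw [Finset.sum_const, nsmul_eq_mul]
      _ ≤ (N : ℝ) * c := by
          apply mul_le_mul_of_nonneg_right _ hc0
          exact_mod_cast (Finset.card_le_univ Sᶜ).trans_eq (by simp)
  calc ∑ k : Fin N, (1 + D k) ^ (-s) = _ + _ := hsplit
    _ ≤ 1 + (N : ℝ) * c := add_le_add h5 h6
    _ = 1 + 2 ^ s * (N : ℝ) * ((N : ℝ) * R) ^ (-(γ * s)) := by rw [hc]; ring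
end
end
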